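/- A transfer operator L for (A, α) is non-degenerate (i.e. α ∘ L ∘ α = α) if and only if the restriction of E = α ∘ L to the corner α(1) A α(1) is a conditional expectation from α(1) A α(1) onto α(A). -/

import Mathlib

open ComplexStarModule in
/-- A transfer operator L for (A, α) is non-degenerate (α∘L∘α = α)
iff E = α ∘ L restricted to the corner α(1)Aα(1) is a conditional expectation
from α(1)Aα(1) onto α(A). -/
theorem transfer_operator_nondegenerate_iff_corner_expectation
    {A : Type*} [NormedRing A] [StarRing A] [CStarRing A] [NormedAlgebra ℂ A]
    [CompleteSpace A] [StarModule ℂ A] [PartialOrder A] [StarOrderedRing A]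
    (α : A →⋆ₐ[ℂ] A) (L : A →L[ℂ] A)
    (hpos : ∀ a : A, 0 ≤ a → 0 ≤ L a)
    (htr : ∀ a b : A, L (α a * b) = a * L b) :
    (∀ a : A, α (L (α a)) = α a) ↔
      ((∀ x : A, α 1 * x * α 1 = x → 0 ≤ x → 0 ≤ α (L x)) ∧
       (fun x => α (L x)) '' {x : A | α 1 * x * α 1 = x} = Set.range α ∧
       (∀ x : A, α 1 * x * α 1 = x → α (L (α (L x))) = α (L x)) ∧
       (∀ a b x : A, α 1 * x * α 1 = x →
          α (L (α a * x * α b)) = α a * α (L x) * α b)) := by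
  letI : CStarAlgebra A := { }
  -- α preserves positivity
  have hα : ∀ a : A, 0 ≤ a → 0 ≤ α a := by
    intro a ha
    have h0 : star (CFC.sqrt a) * CFC.sqrt a = a := by
      rw [(IsSelfAdjoint.of_nonneg (CFC.sqrt_nonneg a)).star_eq]
      exact CFC.sqrt_mul_sqrt_self a ha
    rw [← h0, map_mul, map_star]
    exact star_mul_self_nonneg _
  -- L maps self-adjoint elements to self-adjoint elements
  have hLsa : ∀ h : A, IsSelfAdjoint h → IsSelfAdjoint (L h) := by
    intro h hh
    have h1 : L h = L h⁺ - L h⁻ := by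
      rw [← map_sub, CFC.posPart_sub_negPart h hh]
    rw [h1]
    exact (IsSelfAdjoint.of_nonneg (hpos _ (CFC.posPart_nonneg h))).sub
      (IsSelfAdjoint.of_nonneg (hpos _ (CFC.negPart_nonneg h)))
  -- L is star-preserving
  have hLstar : ∀ a : A, L (star a) = star (L a) := by
    intro a
    have h1 : L a = L (ℜ a : A) + Complex.I • L (ℑ a : A) := by
      conv_lhs => rw [← realPart_add_I_smul_imaginaryPart a]
      rw [map_add, L.map_smul]
    have h2 : star a = (ℜ a : A) - Complex.I • (ℑ a : A) := by
      conv_lhs => rw [← realPart_add_I_smul_imaginaryPart a]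
      rw [star_add, star_smul, (ℜ a).2.star_eq, (ℑ a).2.star_eq, Complex.star_def,
        Complex.conj_I, neg_smul, ← sub_eq_add_neg]
    rw [h2, map_sub, L.map_smul, h1, star_add, star_smul, (hLsa _ (ℜ a).2).star_eq,
      (hLsa _ (ℑ a).2).star_eq, Complex.star_def, Complex.conj_I, neg_smul,
      ← sub_eq_add_neg]
  -- right module property of L
  have htr' : ∀ a b : A, L (b * α a) = L b * a := by
    intro a b
    calc L (b * α a) = L (star (α (star a) * star b)) := by
          rw [star_mul, star_star, map_star, star_star]
      _ = star (L (α (star a) * star b)) := hLstar _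
      _ = star (star a * L (star b)) := by rw [htr]
      _ = L b * a := by rw [star_mul, star_star, hLstar, star_star]
  constructor
  · intro hnd
    refine ⟨fun x _ hx => hα _ (hpos _ hx), ?_, fun x _ => hnd (L x), ?_⟩
    · ext y
      constructor
      · rintro ⟨x, _, rfl⟩
        exact ⟨L x, rfl⟩
      · rintro ⟨a, rfl⟩
        refine ⟨α a, ?_, hnd a⟩
        show α 1 * α a * α 1 = α a
        rw [← map_mul, ← map_mul, one_mul, mul_one]
    · intro a b x _
      rw [mul_assoc, htr, htr', map_mul, map_mul, mul_assoc]
  · rintro ⟨-, himg, hidem, -⟩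
    intro a
    have hmem : α a ∈ (fun x => α (L x)) '' {x : A | α 1 * x * α 1 = x} := by
      rw [himg]; exact ⟨a, rfl⟩
    obtain ⟨x, hx, hxa⟩ := hmem
    have hxa' : α (L x) = α a := hxa
    have := hidem x hx
    rwa [hxa'] at this
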